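/- Let F ⊆ ℝ^d be compact and suppose that for every integer k > 1 there exist a point x ∈ F and R ∈ (0,1) such that F ∩ Q(x,R) can be covered by a single cube of side length 2^{-k}R. Then F has a microset which is a singleton: some sequence of minisets of F converges in the Hausdorff metric to a one-point set. -/

import Mathlib

open Set Metric Filter Topology

/-- Smallest number of axis-parallel cubes of side length `r` (closed balls of radius `r/2`
in the sup metric on `Fin d → ℝ`) needed to cover `A`. -/
noncomputable def coverNum (d : ℕ) (A : Set (Fin d → ℝ)) (r : ℝ) : ℕ :=
  sInf {n : ℕ | ∃ t : Finset (Fin d → ℝ), t.card = n ∧ A ⊆ ⋃ x ∈ t, closedBall x (r / 2)}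

/-- The lower dimension. -/
noncomputable def lowerDim (d : ℕ) (F : Set (Fin d → ℝ)) : ℝ :=
  sSup {s : ℝ | 0 ≤ s ∧ ∃ C : ℝ, 0 < C ∧ ∀ R : ℝ, 0 < R → R < 1 → ∀ r : ℝ, 0 < r → r < R →
    ∀ x ∈ F, C * (R / r) ^ s ≤ (coverNum d (closedBall x R ∩ F) r : ℝ)}

/-- The Assouad dimension. -/
noncomputable def assouadDim (d : ℕ) (F : Set (Fin d → ℝ)) : ℝ :=
  sInf {s : ℝ | 0 ≤ s ∧ ∃ C : ℝ, 0 < C ∧ ∀ R : ℝ, 0 < R → ∀ r : ℝ, 0 < r → r < R →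
    ∀ x ∈ F, (coverNum d (closedBall x R ∩ F) r : ℝ) ≤ C * (R / r) ^ s}

/-- Upper box dimension. -/
noncomputable def ubDim (d : ℕ) (A : Set (Fin d → ℝ)) : ℝ :=
  Filter.limsup (fun r : ℝ => Real.log (coverNum d A r) / (-Real.log r)) (𝓝[>] (0:ℝ))

/-- Lower box dimension. -/
noncomputable def lbDim (d : ℕ) (A : Set (Fin d → ℝ)) : ℝ :=
  Filter.liminf (fun r : ℝ => Real.log (coverNum d A r) / (-Real.log r)) (𝓝[>] (0:ℝ))

/-- `D` is a miniset of `F`: `D = (λF + t) ∩ [0,1]^d` with `λ ≥ 1`, and `D` is nonempty. -/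
def IsMiniset (d : ℕ) (F D : Set (Fin d → ℝ)) : Prop :=
  ∃ lam : ℝ, 1 ≤ lam ∧ ∃ t : Fin d → ℝ,
    D = ((fun x => lam • x + t) '' F) ∩ Icc 0 1 ∧ D.Nonempty

/-- `E` is a microset of `F`: a Hausdorff-metric limit of minisets of `F`. -/
def IsMicroset (d : ℕ) (F E : Set (Fin d → ℝ)) : Prop :=
  IsCompact E ∧ E ⊆ Icc 0 1 ∧ ∃ D : ℕ → Set (Fin d → ℝ),
    (∀ n, IsMiniset d F (D n)) ∧
    Tendsto (fun n => hausdorffDist (D n) E) atTop (𝓝 0)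

/-- The gallery of `F`: microsets intersecting the interior of the unit cube. -/
def InGallery (d : ℕ) (F E : Set (Fin d → ℝ)) : Prop :=
  IsMicroset d F E ∧ (E ∩ interior (Icc (0 : Fin d → ℝ) 1)).Nonempty

/-- If for every `k > 1` some cube `Q(x,R)` with `x ∈ F`, `R ∈ (0,1)`, is such that
`F ∩ Q(x,R)` is covered by a single cube of side `2^{-k} R`, then `F` has a singleton
microset. -/
theorem stmt9 (d : ℕ) (F : Set (Fin d → ℝ)) (hF : IsCompact F) (hne : F.Nonempty)
    (h : ∀ k : ℕ, 1 < k → ∃ x ∈ F, ∃ R : ℝ, 0 < R ∧ R < 1 ∧ ∃ c : Fin d → ℝ,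
      F ∩ closedBall x (R / 2) ⊆ closedBall c (R / 2 ^ k / 2)) :
    ∃ x : Fin d → ℝ, IsMicroset d F {x} := by
  classical
  choose x hxF R hR0 hR1 c hc using fun n : ℕ => h (n + 2) (by omega)
  set half : Fin d → ℝ := fun _ => 1/2 with hhalf
  have halfmem : half ∈ Icc (0 : Fin d → ℝ) 1 := by
    constructor <;> intro i <;> simp [hhalf] <;> norm_num
  set φ : ℕ → (Fin d → ℝ) → (Fin d → ℝ) :=
    fun n y => (R n)⁻¹ • y + (half - (R n)⁻¹ • x n) with hφ
  have hφx : ∀ n, φ n (x n) = half := by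
    intro n
    show (R n)⁻¹ • x n + (half - (R n)⁻¹ • x n) = half
    module
  have hdistφ : ∀ n a b, dist (φ n a) (φ n b) = (R n)⁻¹ * dist a b := by
    intro n a b
    show dist ((R n)⁻¹ • a + (half - (R n)⁻¹ • x n)) ((R n)⁻¹ • b + (half - (R n)⁻¹ • x n)) = _
    rw [dist_add_right, dist_smul₀, Real.norm_eq_abs, abs_of_pos (inv_pos.mpr (hR0 n))]
  set D : ℕ → Set (Fin d → ℝ) := fun n => (φ n '' F) ∩ Icc 0 1 with hD
  have halfD : ∀ n, half ∈ D n := by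
    intro n
    exact ⟨⟨x n, hxF n, hφx n⟩, halfmem⟩
  have key : ∀ n, ∀ a ∈ D n, dist a half ≤ (1/2 : ℝ) ^ (n + 2) := by
    intro n a ha
    obtain ⟨⟨y, hyF, rfl⟩, hy01⟩ := ha
    -- first : dist (φ n y) half ≤ 1/2
    have h1 : dist (φ n y) half ≤ 1/2 := by
      rw [dist_pi_le_iff (by norm_num)]
      intro i
      have h0 := hy01.1 i
      have h1' := hy01.2 i
      rw [Real.dist_eq, abs_le]
      constructor <;> simp_all [hhalf] <;> linarith
    have hyx : dist y (x n) ≤ R n / 2 := by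
      have := h1
      rw [← hφx n, hdistφ] at this
      have hR := hR0 n
      rw [inv_mul_le_iff₀ hR] at this
      linarith
    have hyc : dist y (c n) ≤ R n / 2 ^ (n+2) / 2 :=
      hc n ⟨hyF, mem_closedBall.mpr hyx⟩
    have hxc : dist (x n) (c n) ≤ R n / 2 ^ (n+2) / 2 :=
      hc n ⟨hxF n, mem_closedBall.mpr (by simp [dist_self]; have := hR0 n; linarith)⟩
    have hRpos : (0:ℝ) < R n := hR0 n
    calc dist (φ n y) half ≤ dist (φ n y) (φ n (c n)) + dist (φ n (c n)) (φ n (x n)) := by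
          rw [hφx]; exact dist_triangle _ _ _
      _ = (R n)⁻¹ * dist y (c n) + (R n)⁻¹ * dist (c n) (x n) := by rw [hdistφ, hdistφ]
      _ ≤ (R n)⁻¹ * (R n / 2 ^ (n+2) / 2) + (R n)⁻¹ * (R n / 2 ^ (n+2) / 2) := by
          gcongr
          · rw [dist_comm]; exact hxc
      _ = (1/2 : ℝ) ^ (n + 2) := by
          field_simp
          rw [mul_right_comm, ← mul_pow]; norm_num
  refine ⟨half, isCompact_singleton, by simpa using halfmem, D, ?_, ?_⟩
  · intro n
    refine ⟨(R n)⁻¹, ?_, half - (R n)⁻¹ • x n, rfl, ⟨half, halfD n⟩⟩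
    rw [le_inv_comm₀ one_pos (hR0 n)]
    simpa using (hR1 n).le
  · have hbd : ∀ n, hausdorffDist (D n) {half} ≤ (1/2 : ℝ) ^ (n + 2) := by
      intro n
      apply hausdorffDist_le_of_mem_dist (by positivity)
      · intro a ha; exact ⟨half, rfl, key n a ha⟩
      · rintro b rfl; exact ⟨half, halfD n, by simp⟩
    have h0 : Tendsto (fun n : ℕ => (1/2 : ℝ) ^ (n + 2)) atTop (𝓝 0) :=
      (tendsto_pow_atTop_nhds_zero_of_lt_one (by norm_num) (by norm_num)).comp
        (tendsto_add_atTop_nat 2)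
    exact squeeze_zero (fun n => hausdorffDist_nonneg) hbd h0
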